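/- Let R be a commutative ring with identity, let A be an n×n matrix over R with McCoy rank less than n, and let v ∈ R^n be a right eigenvector of A for the eigenvalue 0 (i.e., Av = 0). Then for all i, j ∈ {1,...,n}, v_i · (Adj A)^j = v_j · (Adj A)^i, where (Adj A)^k denotes the k-th row of the adjugate of A. -/

import Mathlib

open Matrix

/-- Row version of Grinberg's lemma: if `v` is a right eigenvector of `A` for the
eigenvalue `0` (which forces the McCoy rank of `A` to be smaller than `n`), then
`v i * (Adj A)^j = v j * (Adj A)^i` for all rows `i, j` of the adjugate. -/
theorem adjugate_rows_proportional_of_right_eigenvector_zero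
    {R : Type*} [CommRing R] {n : ℕ} (A : Matrix (Fin n) (Fin n) R)
    (v : Fin n → R) (hv : v ≠ 0) (hAv : A.mulVec v = 0) :
    ∀ i j k : Fin n, v i * A.adjugate j k = v j * A.adjugate i k := by
  intro i j k
  set C : Matrix (Fin n) (Fin n) R := A.updateRow k (Pi.single j 1) with hC
  have hCv : C.mulVec v = Pi.single k (v j) := by
    funext m
    by_cases hm : m = k
    · subst hm
      simp [C, mulVec, dotProduct, Pi.single_apply, mul_comm]
    · have : C.mulVec v m = A.mulVec v m := by
        simp [mulVec, dotProduct, C, Matrix.updateRow_apply, hm]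
      rw [this, hAv]
      simp [Pi.single_apply, hm]
  have key : C.det • v = (C.adjugate).mulVec (Pi.single k (v j)) := by
    rw [← hCv, Matrix.mulVec_mulVec, Matrix.adjugate_mul, Matrix.smul_mulVec,
      Matrix.one_mulVec]
  have keyi := congrFun key i
  rw [Matrix.mulVec_single] at keyi
  have hCi : C.adjugate i k = A.adjugate i k := by
    rw [Matrix.adjugate_apply, Matrix.adjugate_apply, hC]
    congr 1
    funext a b
    by_cases h : a = k <;> simp [Matrix.updateRow_apply, h]
  have hCdet : C.det = A.adjugate j k := (Matrix.adjugate_apply A j k).symm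
  simp only [Pi.smul_apply, smul_eq_mul, op_smul_eq_mul, Matrix.col_apply] at keyi
  rw [hCi, hCdet] at keyi
  rw [mul_comm (v i), keyi, mul_comm]
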